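/- The total mass of the BEEW density pieces is one: ∫_{x₂ ∈ (0,∞)} ∫_{x₁ ∈ (0,x₂)} f₁(x₁,x₂) dx₁ dx₂ + ∫_{x₁ ∈ (0,∞)} ∫_{x₂ ∈ (0,x₁)} f₂(x₁,x₂) dx₂ dx₁ + ∫_{x ∈ (0,∞)} f₀(x) dx = 1, where f₁(x₁,x₂) = (α₁+α₃)·α₂·λ²·h(x₁)·h(x₂)·(1−exp(−λH(x₁)))^{α₁+α₃−1}·(1−exp(−λH(x₂)))^{α₂−1}·exp(−λH(x₁)−λH(x₂)), f₂(x₁,x₂) = (α₂+α₃)·α₁·λ²·h(x₁)·h(x₂)·(1−exp(−λH(x₁)))^{α₁−1}·(1−exp(−λH(x₂)))^{α₂+α₃−1}·exp(−λH(x₁)−λH(x₂)), and f₀(x) = α₃·λ·h(x)·exp(−λH(x))·(1−exp(−λH(x)))^{α₁+α₂+α₃−1}. -/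

import Mathlib

open MeasureTheory Real Filter Topology

section beewAux

variable {lam : ℝ} {H h : ℝ → ℝ}

lemma beew_h_nonneg (hHmono : Monotone H)
    (hd : ∀ x : ℝ, 0 < x → HasDerivAt H (h x) x) {x : ℝ} (hx : 0 < x) :
    0 ≤ h x := by
  have hslope : Tendsto (slope H x) (𝓝[≠] x) (𝓝 (h x)) :=
    hasDerivAt_iff_tendsto_slope.1 (hd x hx)
  have hslope' : Tendsto (slope H x) (𝓝[>] x) (𝓝 (h x)) :=
    hslope.mono_left (nhdsWithin_mono x fun y (hy : y ∈ Set.Ioi x) =>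
      Set.mem_compl_singleton_iff.mpr (LT.lt.ne' hy))
  refine ge_of_tendsto hslope' ?_
  filter_upwards [self_mem_nhdsWithin] with y hy
  have hy : x < y := hy
  have h1 : 0 ≤ H y - H x := by have := hHmono hy.le; linarith
  have h2 : 0 < y - x := by linarith
  rw [slope_def_field]
  exact div_nonneg h1 h2.le

lemma beew_G_nonneg (hlam : 0 < lam) (hH : ∀ x, 0 ≤ H x) (x : ℝ) :
    0 ≤ 1 - Real.exp (-lam * H x) := by
  have : Real.exp (-lam * H x) ≤ 1 := by
    rw [Real.exp_le_one_iff]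
    nlinarith [mul_nonneg hlam.le (hH x)]
  linarith

lemma beew_G_pos (hlam : 0 < lam) (hHpos : ∀ x : ℝ, 0 < x → 0 < H x)
    {x : ℝ} (hx : 0 < x) : 0 < 1 - Real.exp (-lam * H x) := by
  have : Real.exp (-lam * H x) < 1 := by
    rw [Real.exp_lt_one_iff]
    nlinarith [mul_pos hlam (hHpos x hx)]
  linarith

lemma beew_hasDerivAt (hlam : 0 < lam) (hHpos : ∀ x : ℝ, 0 < x → 0 < H x)
    (hd : ∀ x : ℝ, 0 < x → HasDerivAt H (h x) x) (a : ℝ)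
    {x : ℝ} (hx : 0 < x) :
    HasDerivAt (fun y => (1 - Real.exp (-lam * H y)) ^ a)
      (a * lam * h x * Real.exp (-lam * H x) *
        (1 - Real.exp (-lam * H x)) ^ (a - 1)) x := by
  have h1 : HasDerivAt (fun y => -lam * H y) (-lam * h x) x :=
    (hd x hx).const_mul (-lam)
  have h2 : HasDerivAt (fun y => Real.exp (-lam * H y))
      (Real.exp (-lam * H x) * (-lam * h x)) x := h1.exp
  have h3 : HasDerivAt (fun y => 1 - Real.exp (-lam * H y))
      (lam * h x * Real.exp (-lam * H x)) x := by
    have := h2.const_sub 1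
    exact this.congr_deriv (by ring)
  have h4 : HasDerivAt (fun t : ℝ => t ^ a)
      (a * (1 - Real.exp (-lam * H x)) ^ (a - 1)) (1 - Real.exp (-lam * H x)) :=
    Real.hasDerivAt_rpow_const (Or.inl (ne_of_gt (beew_G_pos hlam hHpos hx)))
  have h5 := h4.comp x h3
  exact h5.congr_deriv (by ring)

lemma beew_contOn (hlam : 0 < lam) (hHcont0 : ContinuousAt H 0)
    (hd : ∀ x : ℝ, 0 < x → HasDerivAt H (h x) x) {a : ℝ} (ha : 0 < a) :
    ContinuousOn (fun y => (1 - Real.exp (-lam * H y)) ^ a) (Set.Ici 0) := by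
  have houter : Continuous fun t : ℝ => 1 - Real.exp (-lam * t) := by continuity
  have hGcont : ContinuousOn (fun y => 1 - Real.exp (-lam * H y)) (Set.Ici 0) := by
    intro y hy
    rcases eq_or_lt_of_le (Set.mem_Ici.mp hy : (0:ℝ) ≤ y) with rfl | hy'
    · exact (houter.continuousAt.comp hHcont0).continuousWithinAt
    · exact (houter.continuousAt.comp (hd y hy').continuousAt).continuousWithinAt
  intro y hy
  exact (Real.continuousAt_rpow_const _ _ (Or.inr ha.le)).comp_continuousWithinAt
    (hGcont y hy)

lemma beew_deriv_nonneg (hlam : 0 < lam) (hH : ∀ x, 0 ≤ H x)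
    (hHmono : Monotone H)
    (hd : ∀ x : ℝ, 0 < x → HasDerivAt H (h x) x) {a : ℝ} (ha : 0 < a)
    {x : ℝ} (hx : 0 < x) :
    0 ≤ a * lam * h x * Real.exp (-lam * H x) *
      (1 - Real.exp (-lam * H x)) ^ (a - 1) := by
  have h1 := beew_h_nonneg hHmono hd hx
  have h2 := Real.rpow_nonneg (beew_G_nonneg hlam hH x) (a - 1)
  positivity

/-- Key improper integral: total mass of the generalized exponentiated density. -/
lemma beew_keyC (hlam : 0 < lam)
    (hH : ∀ x, 0 ≤ H x) (hHmono : Monotone H)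
    (hH0 : H 0 = 0) (hHcont0 : ContinuousAt H 0)
    (hHpos : ∀ x : ℝ, 0 < x → 0 < H x)
    (hd : ∀ x : ℝ, 0 < x → HasDerivAt H (h x) x)
    (hHtop : Tendsto H atTop atTop) {a : ℝ} (ha : 0 < a) :
    (∫ x in Set.Ioi (0:ℝ), a * lam * h x * Real.exp (-lam * H x) *
      (1 - Real.exp (-lam * H x)) ^ (a - 1)) = 1 := by
  have hFtop : Tendsto (fun x => (1 - Real.exp (-lam * H x)) ^ a) atTop (𝓝 1) := by
    have h1 : Tendsto (fun x => -lam * H x) atTop atBot :=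
      hHtop.const_mul_atTop_of_neg (by linarith)
    have h2 : Tendsto (fun x => Real.exp (-lam * H x)) atTop (𝓝 0) :=
      Real.tendsto_exp_atBot.comp h1
    have h3 : Tendsto (fun x => 1 - Real.exp (-lam * H x)) atTop (𝓝 1) := by
      have := (tendsto_const_nhds (x := (1:ℝ)) (f := atTop)).sub h2
      simpa using this
    have h4 : ContinuousAt (fun t : ℝ => t ^ a) 1 :=
      Real.continuousAt_rpow_const _ _ (Or.inl one_ne_zero)
    have := h4.tendsto.comp h3
    simpa [Real.one_rpow, Function.comp_def] using this
  have := integral_Ioi_of_hasDerivAt_of_nonneg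
    (g := fun y => (1 - Real.exp (-lam * H y)) ^ a)
    (g' := fun x => a * lam * h x * Real.exp (-lam * H x) *
      (1 - Real.exp (-lam * H x)) ^ (a - 1))
    (a := 0)
    ((beew_contOn hlam hHcont0 hd ha) 0 Set.self_mem_Ici)
    (fun x hx => beew_hasDerivAt hlam hHpos hd a hx)
    (fun x hx => beew_deriv_nonneg hlam hH hHmono hd ha hx)
    hFtop
  rw [this]
  simp [hH0, Real.zero_rpow (ne_of_gt ha)]

/-- Key finite integral via FTC. -/
lemma beew_keyD (hlam : 0 < lam)
    (hH : ∀ x, 0 ≤ H x) (hHmono : Monotone H)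
    (hH0 : H 0 = 0) (hHcont0 : ContinuousAt H 0)
    (hHpos : ∀ x : ℝ, 0 < x → 0 < H x)
    (hd : ∀ x : ℝ, 0 < x → HasDerivAt H (h x) x)
    {a : ℝ} (ha : 0 < a) {b : ℝ} (hb : 0 < b) :
    (∫ x in Set.Ioo (0:ℝ) b, a * lam * h x * Real.exp (-lam * H x) *
      (1 - Real.exp (-lam * H x)) ^ (a - 1))
      = (1 - Real.exp (-lam * H b)) ^ a := by
  have hcont : ContinuousOn (fun y => (1 - Real.exp (-lam * H y)) ^ a)
      (Set.Icc 0 b) := (beew_contOn hlam hHcont0 hd ha).mono Set.Icc_subset_Ici_self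
  have hint : IntervalIntegrable
      (fun x => a * lam * h x * Real.exp (-lam * H x) *
        (1 - Real.exp (-lam * H x)) ^ (a - 1)) volume 0 b := by
    apply intervalIntegral.intervalIntegrable_deriv_of_nonneg
      (g := fun y => (1 - Real.exp (-lam * H y)) ^ a)
    · rwa [Set.uIcc_of_le hb.le]
    · rw [min_eq_left hb.le, max_eq_right hb.le]
      exact fun x hx => beew_hasDerivAt hlam hHpos hd a hx.1
    · rw [min_eq_left hb.le, max_eq_right hb.le]
      exact fun x hx => beew_deriv_nonneg hlam hH hHmono hd ha hx.1
  have := intervalIntegral.integral_eq_sub_of_hasDeriv_right_of_le hb.le hcont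
    (fun x hx => (beew_hasDerivAt hlam hHpos hd a hx.1).hasDerivWithinAt) hint
  rw [intervalIntegral.integral_of_le hb.le, integral_Ioc_eq_integral_Ioo] at this
  rw [this]
  simp [hH0, Real.zero_rpow (ne_of_gt ha)]

end beewAux

/-- The total mass of the three BEEW density pieces is one. -/
theorem beew_total_mass
    (lam α₁ α₂ α₃ : ℝ) (hlam : 0 < lam)
    (hα₁ : 0 < α₁) (hα₂ : 0 < α₂) (hα₃ : 0 < α₃)
    (H h : ℝ → ℝ) (hH : ∀ x, 0 ≤ H x) (hHmono : Monotone H)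
    (hH0 : H 0 = 0) (hHcont0 : ContinuousAt H 0)
    (hHpos : ∀ x : ℝ, 0 < x → 0 < H x)
    (hd : ∀ x : ℝ, 0 < x → HasDerivAt H (h x) x)
    (hHtop : Tendsto H atTop atTop) :
    (∫ x₂ in Set.Ioi (0 : ℝ), ∫ x₁ in Set.Ioo (0 : ℝ) x₂,
        (α₁ + α₃) * α₂ * lam ^ (2 : ℕ) * h x₁ * h x₂ *
          (1 - Real.exp (-lam * H x₁)) ^ (α₁ + α₃ - 1) *
          (1 - Real.exp (-lam * H x₂)) ^ (α₂ - 1) *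
          Real.exp (-lam * H x₁ - lam * H x₂)) +
    (∫ x₁ in Set.Ioi (0 : ℝ), ∫ x₂ in Set.Ioo (0 : ℝ) x₁,
        (α₂ + α₃) * α₁ * lam ^ (2 : ℕ) * h x₁ * h x₂ *
          (1 - Real.exp (-lam * H x₁)) ^ (α₁ - 1) *
          (1 - Real.exp (-lam * H x₂)) ^ (α₂ + α₃ - 1) *
          Real.exp (-lam * H x₁ - lam * H x₂)) +
    (∫ x in Set.Ioi (0 : ℝ),
        α₃ * lam * h x * Real.exp (-lam * H x) *
          (1 - Real.exp (-lam * H x)) ^ (α₁ + α₂ + α₃ - 1)) = 1 := by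
  have hspos : 0 < α₁ + α₂ + α₃ := by positivity
  have keyC : ∀ a : ℝ, 0 < a →
      (∫ x in Set.Ioi (0:ℝ), a * lam * h x * Real.exp (-lam * H x) *
        (1 - Real.exp (-lam * H x)) ^ (a - 1)) = 1 :=
    fun a ha => beew_keyC hlam hH hHmono hH0 hHcont0 hHpos hd hHtop ha
  have keyD : ∀ a : ℝ, 0 < a → ∀ b : ℝ, 0 < b →
      (∫ x in Set.Ioo (0:ℝ) b, a * lam * h x * Real.exp (-lam * H x) *
        (1 - Real.exp (-lam * H x)) ^ (a - 1))
        = (1 - Real.exp (-lam * H b)) ^ a :=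
    fun a ha b hb => beew_keyD hlam hH hHmono hH0 hHcont0 hHpos hd ha hb
  have hterm1 : (∫ x₂ in Set.Ioi (0 : ℝ), ∫ x₁ in Set.Ioo (0 : ℝ) x₂,
        (α₁ + α₃) * α₂ * lam ^ (2 : ℕ) * h x₁ * h x₂ *
          (1 - Real.exp (-lam * H x₁)) ^ (α₁ + α₃ - 1) *
          (1 - Real.exp (-lam * H x₂)) ^ (α₂ - 1) *
          Real.exp (-lam * H x₁ - lam * H x₂)) = α₂ / (α₁ + α₂ + α₃) := by
    have main : (∫ x₂ in Set.Ioi (0 : ℝ), ∫ x₁ in Set.Ioo (0 : ℝ) x₂,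
        (α₁ + α₃) * α₂ * lam ^ (2 : ℕ) * h x₁ * h x₂ *
          (1 - Real.exp (-lam * H x₁)) ^ (α₁ + α₃ - 1) *
          (1 - Real.exp (-lam * H x₂)) ^ (α₂ - 1) *
          Real.exp (-lam * H x₁ - lam * H x₂))
        = ∫ x₂ in Set.Ioi (0 : ℝ), (α₂ / (α₁ + α₂ + α₃)) *
            ((α₁ + α₂ + α₃) * lam * h x₂ * Real.exp (-lam * H x₂) *
              (1 - Real.exp (-lam * H x₂)) ^ (α₁ + α₂ + α₃ - 1)) := by
      apply setIntegral_congr_fun measurableSet_Ioi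
      intro x₂ hx₂
      have hx₂ : (0:ℝ) < x₂ := hx₂
      beta_reduce
      have hinner : (∫ x₁ in Set.Ioo (0 : ℝ) x₂,
          (α₁ + α₃) * α₂ * lam ^ (2 : ℕ) * h x₁ * h x₂ *
            (1 - Real.exp (-lam * H x₁)) ^ (α₁ + α₃ - 1) *
            (1 - Real.exp (-lam * H x₂)) ^ (α₂ - 1) *
            Real.exp (-lam * H x₁ - lam * H x₂))
          = (α₂ * lam * h x₂ * (1 - Real.exp (-lam * H x₂)) ^ (α₂ - 1) *
              Real.exp (-lam * H x₂)) *
            (1 - Real.exp (-lam * H x₂)) ^ (α₁ + α₃) := by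
        rw [← keyD (α₁ + α₃) (by positivity) x₂ hx₂, ← integral_const_mul]
        apply setIntegral_congr_fun measurableSet_Ioo
        intro x₁ _
        beta_reduce
        have hexp : Real.exp (-lam * H x₁ - lam * H x₂)
            = Real.exp (-lam * H x₁) * Real.exp (-lam * H x₂) := by
          rw [← Real.exp_add]; ring_nf
        rw [hexp]; ring
      rw [hinner]
      have hcomb : (1 - Real.exp (-lam * H x₂)) ^ (α₂ - 1) *
          (1 - Real.exp (-lam * H x₂)) ^ (α₁ + α₃)
          = (1 - Real.exp (-lam * H x₂)) ^ (α₁ + α₂ + α₃ - 1) := by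
        rw [← Real.rpow_add (beew_G_pos hlam hHpos hx₂)]
        ring_nf
      have hre : α₂ * lam * h x₂ * (1 - Real.exp (-lam * H x₂)) ^ (α₂ - 1) *
          Real.exp (-lam * H x₂) * (1 - Real.exp (-lam * H x₂)) ^ (α₁ + α₃)
          = α₂ * lam * h x₂ * Real.exp (-lam * H x₂) *
            ((1 - Real.exp (-lam * H x₂)) ^ (α₂ - 1) *
              (1 - Real.exp (-lam * H x₂)) ^ (α₁ + α₃)) := by ring
      rw [hre, hcomb]
      field_simp
      try ring
    rw [main, integral_const_mul, keyC _ hspos, mul_one]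
  have hterm2 : (∫ x₁ in Set.Ioi (0 : ℝ), ∫ x₂ in Set.Ioo (0 : ℝ) x₁,
        (α₂ + α₃) * α₁ * lam ^ (2 : ℕ) * h x₁ * h x₂ *
          (1 - Real.exp (-lam * H x₁)) ^ (α₁ - 1) *
          (1 - Real.exp (-lam * H x₂)) ^ (α₂ + α₃ - 1) *
          Real.exp (-lam * H x₁ - lam * H x₂)) = α₁ / (α₁ + α₂ + α₃) := by
    have main : (∫ x₁ in Set.Ioi (0 : ℝ), ∫ x₂ in Set.Ioo (0 : ℝ) x₁,
        (α₂ + α₃) * α₁ * lam ^ (2 : ℕ) * h x₁ * h x₂ *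
          (1 - Real.exp (-lam * H x₁)) ^ (α₁ - 1) *
          (1 - Real.exp (-lam * H x₂)) ^ (α₂ + α₃ - 1) *
          Real.exp (-lam * H x₁ - lam * H x₂))
        = ∫ x₁ in Set.Ioi (0 : ℝ), (α₁ / (α₁ + α₂ + α₃)) *
            ((α₁ + α₂ + α₃) * lam * h x₁ * Real.exp (-lam * H x₁) *
              (1 - Real.exp (-lam * H x₁)) ^ (α₁ + α₂ + α₃ - 1)) := by
      apply setIntegral_congr_fun measurableSet_Ioi
      intro x₁ hx₁
      have hx₁ : (0:ℝ) < x₁ := hx₁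
      beta_reduce
      have hinner : (∫ x₂ in Set.Ioo (0 : ℝ) x₁,
          (α₂ + α₃) * α₁ * lam ^ (2 : ℕ) * h x₁ * h x₂ *
            (1 - Real.exp (-lam * H x₁)) ^ (α₁ - 1) *
            (1 - Real.exp (-lam * H x₂)) ^ (α₂ + α₃ - 1) *
            Real.exp (-lam * H x₁ - lam * H x₂))
          = (α₁ * lam * h x₁ * (1 - Real.exp (-lam * H x₁)) ^ (α₁ - 1) *
              Real.exp (-lam * H x₁)) *
            (1 - Real.exp (-lam * H x₁)) ^ (α₂ + α₃) := by
        rw [← keyD (α₂ + α₃) (by positivity) x₁ hx₁, ← integral_const_mul]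
        apply setIntegral_congr_fun measurableSet_Ioo
        intro x₂ _
        beta_reduce
        have hexp : Real.exp (-lam * H x₁ - lam * H x₂)
            = Real.exp (-lam * H x₁) * Real.exp (-lam * H x₂) := by
          rw [← Real.exp_add]; ring_nf
        rw [hexp]; ring
      rw [hinner]
      have hcomb : (1 - Real.exp (-lam * H x₁)) ^ (α₁ - 1) *
          (1 - Real.exp (-lam * H x₁)) ^ (α₂ + α₃)
          = (1 - Real.exp (-lam * H x₁)) ^ (α₁ + α₂ + α₃ - 1) := by
        rw [← Real.rpow_add (beew_G_pos hlam hHpos hx₁)]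
        ring_nf
      have hre : α₁ * lam * h x₁ * (1 - Real.exp (-lam * H x₁)) ^ (α₁ - 1) *
          Real.exp (-lam * H x₁) * (1 - Real.exp (-lam * H x₁)) ^ (α₂ + α₃)
          = α₁ * lam * h x₁ * Real.exp (-lam * H x₁) *
            ((1 - Real.exp (-lam * H x₁)) ^ (α₁ - 1) *
              (1 - Real.exp (-lam * H x₁)) ^ (α₂ + α₃)) := by ring
      rw [hre, hcomb]
      field_simp
      try ring
    rw [main, integral_const_mul, keyC _ hspos, mul_one]
  have hterm3 : (∫ x in Set.Ioi (0 : ℝ),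
        α₃ * lam * h x * Real.exp (-lam * H x) *
          (1 - Real.exp (-lam * H x)) ^ (α₁ + α₂ + α₃ - 1))
        = α₃ / (α₁ + α₂ + α₃) := by
    have main : (∫ x in Set.Ioi (0 : ℝ),
        α₃ * lam * h x * Real.exp (-lam * H x) *
          (1 - Real.exp (-lam * H x)) ^ (α₁ + α₂ + α₃ - 1))
        = ∫ x in Set.Ioi (0 : ℝ), (α₃ / (α₁ + α₂ + α₃)) *
            ((α₁ + α₂ + α₃) * lam * h x * Real.exp (-lam * H x) *
              (1 - Real.exp (-lam * H x)) ^ (α₁ + α₂ + α₃ - 1)) := by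
      apply setIntegral_congr_fun measurableSet_Ioi
      intro x _
      beta_reduce
      field_simp
      try ring
    rw [main, integral_const_mul, keyC _ hspos, mul_one]
  rw [hterm1, hterm2, hterm3]
  field_simp
  ring
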